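/- Let λ > 0, let ψ ∈ P^r satisfy Γ_λ(ψ) = L(1), and define e(t) = exp(−λ(t−t₀)) − ψ(t). Then sup_{t∈I} |e(t)/e(t₀)| ≤ 2 − exp(−λk). Consequently, the constant C^{L²} = Υ(r, kλ) · sup_{t∈I} |e(t)/e(t₀)| + 1 satisfies 1 ≤ C^{L²} ≤ (2 − exp(−λk)) Υ(r, kλ) + 1, where Υ(r, ϱ) = √(3/(2(2r+1)+ϱ)). -/

import Mathlib

open Polynomial MeasureTheory intervalIntegral

/-- The rescaled Legendre polynomials on `[t₀, t₁]`: `K i` has degree `i`,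
`K i (t₁) = 1`, `K i (t₀) = (-1)^i`, and they are `L²(t₀,t₁)`-orthogonal with
`∫ K i ^ 2 = (t₁ - t₀)/(2 i + 1)`. -/
def IsLegendreBasis (t₀ t₁ : ℝ) (K : ℕ → Polynomial ℝ) : Prop :=
  (∀ i, (K i).natDegree = i) ∧ (∀ i, (K i).eval t₁ = 1) ∧
  (∀ i, (K i).eval t₀ = (-1 : ℝ) ^ i) ∧
  (∀ i j, (∫ t in t₀..t₁, (K i).eval t * (K j).eval t) =
    if i = j then (t₁ - t₀) / (2 * (i : ℝ) + 1) else 0)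

/-- The lifting operator `L(z) = (z/k) ∑_{i=0}^r (-1)^i (2i+1) K_i`. -/
noncomputable def Lop (t₀ t₁ : ℝ) (r : ℕ) (K : ℕ → Polynomial ℝ) (z : ℝ) : Polynomial ℝ :=
  Polynomial.C (z / (t₁ - t₀)) *
    ∑ i ∈ Finset.range (r + 1), Polynomial.C ((-1 : ℝ) ^ i * (2 * (i : ℝ) + 1)) * K i

/-- The endpoint lifting operator `L̂(z) = (z/k) ∑_{i=0}^r (2i+1) K_i`. -/
noncomputable def LopE (t₀ t₁ : ℝ) (r : ℕ) (K : ℕ → Polynomial ℝ) (z : ℝ) : Polynomial ℝ :=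
  Polynomial.C (z / (t₁ - t₀)) *
    ∑ i ∈ Finset.range (r + 1), Polynomial.C (2 * (i : ℝ) + 1) * K i

/-- The scalar dG operator `Γ_λ(v) = v' + L(v(t₀)) + λ v`. -/
noncomputable def Gam (t₀ t₁ : ℝ) (r : ℕ) (K : ℕ → Polynomial ℝ) (lam : ℝ)
    (v : Polynomial ℝ) : Polynomial ℝ :=
  Polynomial.derivative v + Lop t₀ t₁ r K (v.eval t₀) + Polynomial.C lam * v

/-- The dG error function `e(t) = exp(-λ (t - t₀)) - ψ(t)`. -/
noncomputable def errF (t₀ lam : ℝ) (ψ : Polynomial ℝ) (t : ℝ) : ℝ :=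
  Real.exp (-lam * (t - t₀)) - ψ.eval t

/-- `Υ(r, ϱ) = √(3 / (2 (2 r + 1) + ϱ))`. -/
noncomputable def Upsilon (r : ℕ) (ρ : ℝ) : ℝ :=
  Real.sqrt (3 / (2 * (2 * (r : ℝ) + 1) + ρ))

/-- The stability constant `C^{L²} = Υ(r, kλ) ⬝ sup_{t ∈ I} |e(t)/e(t₀)| + 1`. -/
noncomputable def CL2 (t₀ t₁ : ℝ) (r : ℕ) (lam : ℝ) (ψ : Polynomial ℝ) : ℝ :=
  Upsilon r ((t₁ - t₀) * lam) *
    (⨆ t ∈ Set.Ioc t₀ t₁, |errF t₀ lam ψ t / errF t₀ lam ψ t₀|) + 1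



section
variable {t₀ t₁ : ℝ} {K : ℕ → Polynomial ℝ}

lemma Kne (hK : IsLegendreBasis t₀ t₁ K) (i : ℕ) : (K i).coeff i ≠ 0 := by
  have h1 : K i ≠ 0 := by
    intro h
    have := hK.2.1 i
    rw [h] at this; simp at this
  have h2 : (K i).leadingCoeff ≠ 0 := leadingCoeff_ne_zero.mpr h1
  rwa [leadingCoeff, hK.1 i] at h2

lemma decomp (hK : IsLegendreBasis t₀ t₁ K) :
    ∀ n (q : Polynomial ℝ), q.natDegree ≤ n →
      ∃ c : ℕ → ℝ, q = ∑ j ∈ Finset.range (n+1), Polynomial.C (c j) * K j := by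
  intro n
  induction n with
  | zero =>
    intro q hq
    refine ⟨fun _ => q.coeff 0 / (K 0).coeff 0, ?_⟩
    have h0 : K 0 = C ((K 0).coeff 0) := eq_C_of_natDegree_le_zero (le_of_eq (hK.1 0))
    rw [Finset.sum_range_one, eq_C_of_natDegree_le_zero hq]
    nth_rewrite 2 [h0]
    rw [← C_mul]
    congr 1
    field_simp [Kne hK 0]
    simp
  | succ m ih =>
    intro q hq
    set a := q.coeff (m+1) / (K (m+1)).coeff (m+1) with ha
    have h1 : (q - C a * K (m+1)).natDegree ≤ m := by
      rw [natDegree_le_iff_coeff_eq_zero]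
      intro N hN
      rcases eq_or_lt_of_le (Nat.succ_le_of_lt hN) with h | h
      · rw [coeff_sub, coeff_C_mul, ← h, ha, div_mul_cancel₀ _ (Kne hK (m+1)), sub_self]
      · rw [coeff_sub, coeff_C_mul,
          coeff_eq_zero_of_natDegree_lt (lt_of_le_of_lt hq h),
          coeff_eq_zero_of_natDegree_lt (lt_of_le_of_lt (le_of_eq (hK.1 (m+1))) h),
          mul_zero, sub_self]
    obtain ⟨c, hc⟩ := ih _ h1
    refine ⟨fun j => if j = m+1 then a else c j, ?_⟩
    rw [Finset.sum_range_succ,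
      Finset.sum_congr rfl (g := fun j => C (c j) * K j)
        (fun j hj => by simp only []; rw [if_neg (by simp at hj; omega)]), ← hc]
    simp

lemma polint (p q : Polynomial ℝ) (a b : ℝ) :
    IntervalIntegrable (fun t => p.eval t * q.eval t) volume a b :=
  ((p.continuous).mul (q.continuous)).intervalIntegrable a b

/-- integral of (sum decomposition) against another poly -/
lemma integral_sum_mul (c : ℕ → ℝ) (n : ℕ) (v : Polynomial ℝ) :
    (∫ t in t₀..t₁, (∑ j ∈ Finset.range (n+1), Polynomial.C (c j) * K j).eval t * v.eval t)
      = ∑ j ∈ Finset.range (n+1), c j * ∫ t in t₀..t₁, (K j).eval t * v.eval t := by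
  have : ∀ t : ℝ, (∑ j ∈ Finset.range (n+1), Polynomial.C (c j) * K j).eval t * v.eval t
      = ∑ j ∈ Finset.range (n+1), c j * ((K j).eval t * v.eval t) := by
    intro t
    rw [eval_finset_sum, Finset.sum_mul]
    exact Finset.sum_congr rfl fun j _ => by rw [eval_mul, eval_C]; ring
  rw [intervalIntegral.integral_congr (fun t _ => this t)]
  rw [intervalIntegral.integral_finset_sum
    (fun j _ => ((polint (K j) v t₀ t₁).const_mul (c j)))]
  exact Finset.sum_congr rfl fun j _ => intervalIntegral.integral_const_mul _ _

/-- K i is orthogonal to polys of degree < i -/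
lemma orth (hK : IsLegendreBasis t₀ t₁ K) {n : ℕ} {q : Polynomial ℝ} (hq : q.natDegree ≤ n)
    {i : ℕ} (hni : n < i) : (∫ t in t₀..t₁, q.eval t * (K i).eval t) = 0 := by
  obtain ⟨c, hc⟩ := decomp hK n q hq
  rw [hc, integral_sum_mul]
  apply Finset.sum_eq_zero
  intro j hj
  simp at hj
  rw [hK.2.2.2 j i, if_neg (by omega), mul_zero]

lemma orth' (hK : IsLegendreBasis t₀ t₁ K) {n : ℕ} {q : Polynomial ℝ} (hq : q.natDegree ≤ n)
    {i : ℕ} (hni : n < i) : (∫ t in t₀..t₁, (K i).eval t * q.eval t) = 0 := by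
  rw [intervalIntegral.integral_congr (g := fun t => q.eval t * (K i).eval t)
    (fun t _ => mul_comm _ _)]
  exact orth hK hq hni

lemma eq_zero_of_orth (ht : t₀ < t₁) (hK : IsLegendreBasis t₀ t₁ K) {n : ℕ} {p : Polynomial ℝ}
    (hp : p.natDegree ≤ n)
    (h : ∀ j ≤ n, (∫ t in t₀..t₁, p.eval t * (K j).eval t) = 0) : p = 0 := by
  obtain ⟨c, hc⟩ := decomp hK n p hp
  have hcz : ∀ j ∈ Finset.range (n+1), Polynomial.C (c j) * K j = 0 := by
    intro j hj
    simp only [Finset.mem_range] at hj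
    have := h j (by omega)
    rw [hc, integral_sum_mul] at this
    have heval : ∀ i ∈ Finset.range (n+1),
        c i * (∫ t in t₀..t₁, (K i).eval t * (K j).eval t)
          = if i = j then c i * ((t₁ - t₀) / (2*(i:ℝ)+1)) else 0 := by
      intro i _
      rw [hK.2.2.2 i j]
      split <;> simp
    rw [Finset.sum_congr rfl heval, Finset.sum_ite_eq' _ j _, if_pos (by simp; omega)] at this
    have h2 : (t₁ - t₀) / (2*(j:ℝ)+1) ≠ 0 := by
      apply div_ne_zero (by linarith) (by positivity)
    have : c j = 0 := by
      rcases mul_eq_zero.mp this with h | h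
      · exact h
      · exact absurd h h2
    rw [this]; simp
  rw [hc, Finset.sum_congr rfl hcz]
  simp

end

lemma ibp (t₀ t₁ : ℝ) (p q : Polynomial ℝ) :
    (∫ t in t₀..t₁, (derivative p).eval t * q.eval t)
      = p.eval t₁ * q.eval t₁ - p.eval t₀ * q.eval t₀
        - ∫ t in t₀..t₁, p.eval t * (derivative q).eval t := by
  have h1 : ∀ t ∈ Set.uIcc t₀ t₁, HasDerivAt (fun u => (p*q).eval u)
      ((derivative (p*q)).eval t) t := fun t _ => (p*q).hasDerivAt t
  have h2 := intervalIntegral.integral_eq_sub_of_hasDerivAt h1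
    (((derivative (p*q)).continuous).intervalIntegrable t₀ t₁)
  rw [derivative_mul] at h2
  have h3 : (∫ t in t₀..t₁, (derivative p * q + p * derivative q).eval t)
      = (∫ t in t₀..t₁, (derivative p).eval t * q.eval t)
        + ∫ t in t₀..t₁, p.eval t * (derivative q).eval t := by
    rw [intervalIntegral.integral_congr
      (g := fun t => (derivative p).eval t * q.eval t + p.eval t * (derivative q).eval t)
      (fun t _ => by simp [eval_add, eval_mul])]
    exact intervalIntegral.integral_add
      (((derivative p).continuous.mul q.continuous).intervalIntegrable _ _)
      ((p.continuous.mul (derivative q).continuous).intervalIntegrable _ _)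
  rw [h3, eval_mul, eval_mul] at h2
  linarith


section
variable {t₀ t₁ : ℝ} {K : ℕ → Polynomial ℝ}

lemma integral_lop_mul (ht : t₀ < t₁) (hK : IsLegendreBasis t₀ t₁ K) (r j : ℕ) (hj : j ≤ r) :
    (∫ t in t₀..t₁, (Lop t₀ t₁ r K 1).eval t * (K j).eval t) = (-1:ℝ)^j := by
  have h1 : ∀ t : ℝ, (Lop t₀ t₁ r K 1).eval t * (K j).eval t
      = (1/(t₁-t₀)) * ((∑ i ∈ Finset.range (r+1),
          Polynomial.C ((-1:ℝ)^i * (2*(i:ℝ)+1)) * K i).eval t * (K j).eval t) := by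
    intro t; simp [Lop, eval_mul]; ring
  rw [intervalIntegral.integral_congr (fun t _ => h1 t),
    intervalIntegral.integral_const_mul, integral_sum_mul]
  have h2 : ∀ i ∈ Finset.range (r+1),
      ((-1:ℝ)^i * (2*(i:ℝ)+1)) * (∫ t in t₀..t₁, (K i).eval t * (K j).eval t)
        = if i = j then ((-1:ℝ)^i * (2*(i:ℝ)+1)) * ((t₁-t₀)/(2*(i:ℝ)+1)) else 0 := by
    intro i _
    rw [hK.2.2.2 i j]
    split <;> simp
  rw [Finset.sum_congr rfl h2, Finset.sum_ite_eq' _ j _, if_pos (by simp; omega)]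
  have h3 : (2*(j:ℝ)+1) ≠ 0 := by positivity
  have h4 : t₁ - t₀ ≠ 0 := ne_of_gt (by linarith)
  field_simp

lemma lop_eq (ht : t₀ < t₁) (hK : IsLegendreBasis t₀ t₁ K) (r : ℕ) :
    Lop t₀ t₁ r K 1 = Polynomial.C ((-1:ℝ)^r / 2) * derivative (K (r+1) - K r) := by
  set D := Polynomial.C ((-1:ℝ)^r / 2) * derivative (K (r+1) - K r) with hD
  have hdegL : (Lop t₀ t₁ r K 1).natDegree ≤ r := by
    apply le_trans (natDegree_C_mul_le _ _)
    apply natDegree_sum_le_of_forall_le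
    intro i hi
    simp only [Finset.mem_range] at hi
    exact le_trans (natDegree_C_mul_le _ _) (le_trans (le_of_eq (hK.1 i)) (by omega))
  have hdegD : D.natDegree ≤ r := by
    apply le_trans (natDegree_C_mul_le _ _)
    apply le_trans (natDegree_derivative_le _)
    have : (K (r+1) - K r).natDegree ≤ r + 1 :=
      le_trans (natDegree_sub_le _ _)
        (max_le (le_of_eq (hK.1 (r+1))) (le_trans (le_of_eq (hK.1 r)) (by omega)))
    omega
  have key : ∀ j ≤ r, (∫ t in t₀..t₁, (Lop t₀ t₁ r K 1 - D).eval t * (K j).eval t) = 0 := by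
    intro j hj
    have hsplit : (∫ t in t₀..t₁, (Lop t₀ t₁ r K 1 - D).eval t * (K j).eval t)
        = (∫ t in t₀..t₁, (Lop t₀ t₁ r K 1).eval t * (K j).eval t)
          - ∫ t in t₀..t₁, D.eval t * (K j).eval t := by
      rw [← intervalIntegral.integral_sub (polint _ _ _ _) (polint _ _ _ _)]
      exact intervalIntegral.integral_congr (fun t _ => by simp [eval_sub]; ring)
    have hDj : (∫ t in t₀..t₁, D.eval t * (K j).eval t) = (-1:ℝ)^j := by
      have hpull : ∀ t : ℝ, D.eval t * (K j).eval t
          = ((-1:ℝ)^r / 2) * ((derivative (K (r+1) - K r)).eval t * (K j).eval t) := by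
        intro t; simp [hD, eval_mul]; ring
      rw [intervalIntegral.integral_congr (fun t _ => hpull t),
        intervalIntegral.integral_const_mul, ibp]
      have hz : (∫ t in t₀..t₁, (K (r+1) - K r).eval t * (derivative (K j)).eval t) = 0 := by
        have hsp : (∫ t in t₀..t₁, (K (r+1) - K r).eval t * (derivative (K j)).eval t)
            = (∫ t in t₀..t₁, (K (r+1)).eval t * (derivative (K j)).eval t)
              - ∫ t in t₀..t₁, (K r).eval t * (derivative (K j)).eval t := by
          rw [← intervalIntegral.integral_sub (polint _ _ _ _) (polint _ _ _ _)]
          exact intervalIntegral.integral_congr (fun t _ => by simp [eval_sub]; ring)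
        rcases Nat.eq_zero_or_pos j with hj0 | hj0
        · have hKj : derivative (K j) = 0 := by
            have : K j = Polynomial.C ((K j).coeff 0) :=
              eq_C_of_natDegree_le_zero (le_of_eq (by rw [hK.1 j, hj0]))
            rw [this]; simp
          rw [hsp, hKj]; simp
        · have hd : (derivative (K j)).natDegree ≤ j - 1 := by
            have := natDegree_derivative_le (K j); rwa [hK.1 j] at this
          rw [hsp, orth' hK hd (by omega), orth' hK hd (by omega), sub_zero]
      have h4 : ((-1:ℝ)^r)*((-1:ℝ)^r) = 1 := by
        rw [← pow_add]
        exact Even.neg_one_pow ⟨r, by omega⟩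
      rw [hz, eval_sub, eval_sub, hK.2.1, hK.2.1, hK.2.2.1, hK.2.2.1, hK.2.1 j, hK.2.2.1 j,
        pow_succ]
      linear_combination ((-1:ℝ)^j) * h4
    rw [hsplit, hDj, integral_lop_mul ht hK r j hj, sub_self]
  have : Lop t₀ t₁ r K 1 - D = 0 :=
    eq_zero_of_orth ht hK (le_trans (natDegree_sub_le _ _) (max_le hdegL hdegD)) key
  exact eq_of_sub_eq_zero this

lemma K_zero (hK : IsLegendreBasis t₀ t₁ K) : K 0 = Polynomial.C 1 := by
  have h0 : K 0 = Polynomial.C ((K 0).coeff 0) := eq_C_of_natDegree_le_zero (le_of_eq (hK.1 0))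
  have := hK.2.1 0
  rw [h0] at this ⊢
  simp at this
  rw [this]

lemma legendre_ode (ht : t₀ < t₁) (hK : IsLegendreBasis t₀ t₁ K) (i : ℕ) :
    derivative (((X - Polynomial.C t₀) * (Polynomial.C t₁ - X)) * derivative (K i))
      = - (Polynomial.C ((i:ℝ)*((i:ℝ)+1)) * K i) := by
  rcases Nat.eq_zero_or_pos i with hi0 | hi0
  · subst hi0
    rw [K_zero hK]
    simp
  obtain ⟨m, rfl⟩ : ∃ m, i = m + 1 := ⟨i - 1, by omega⟩
  set W : Polynomial ℝ := (X - Polynomial.C t₀) * (Polynomial.C t₁ - X) with hW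
  set E : Polynomial ℝ := derivative (W * derivative (K (m+1)))
    + Polynomial.C (((m:ℝ)+1)*((m:ℝ)+2)) * K (m+1) with hE
  have hWdeg : W.natDegree ≤ 2 := by
    apply le_trans (natDegree_mul_le)
    have h1 : (X - Polynomial.C t₀).natDegree ≤ 1 :=
      le_trans (natDegree_sub_le _ _) (by simp)
    have h2 : (Polynomial.C t₁ - X).natDegree ≤ 1 :=
      le_trans (natDegree_sub_le _ _) (by simp)
    omega
  have hKd : (derivative (K (m+1))).natDegree ≤ m := by
    have := natDegree_derivative_le (K (m+1)); rwa [hK.1] at this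
  have hdegE : E.natDegree ≤ m + 1 := by
    apply le_trans (natDegree_add_le _ _)
    apply max_le
    · apply le_trans (natDegree_derivative_le _)
      have : (W * derivative (K (m+1))).natDegree ≤ m + 2 :=
        le_trans natDegree_mul_le (by omega)
      omega
    · exact le_trans (natDegree_C_mul_le _ _) (le_of_eq (hK.1 _))
  -- coefficient m+1 of E vanishes
  have hcoeff : E.coeff (m+1) = 0 := by
    have hq1 : (derivative (K (m+1))).coeff m = (K (m+1)).coeff (m+1) * ((m:ℝ)+1) := by
      rw [coeff_derivative]
    have hq2 : (derivative (K (m+1))).coeff (m+1) = 0 :=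
      coeff_eq_zero_of_natDegree_lt (by omega)
    have hq3 : (derivative (K (m+1))).coeff (m+2) = 0 :=
      coeff_eq_zero_of_natDegree_lt (by omega)
    have hWexp : W = -(X^2) + Polynomial.C (t₀+t₁) * X - Polynomial.C (t₀*t₁) := by
      rw [hW]; ring_nf; simp [C_mul, C_add]; ring
    have hWq : (W * derivative (K (m+1))).coeff (m+2)
        = -(K (m+1)).coeff (m+1) * ((m:ℝ)+1) := by
      rw [hWexp]
      have : (-(X^2) + Polynomial.C (t₀+t₁) * X - Polynomial.C (t₀*t₁)) * derivative (K (m+1))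
          = -(derivative (K (m+1)) * X^2) + Polynomial.C (t₀+t₁) * (derivative (K (m+1)) * X)
            - Polynomial.C (t₀*t₁) * derivative (K (m+1)) := by ring
      rw [this]
      rw [coeff_sub, coeff_add, coeff_neg, coeff_C_mul, coeff_C_mul]
      have e1 : (derivative (K (m+1)) * X^2).coeff (m+2) = (derivative (K (m+1))).coeff m := by
        have := coeff_mul_X_pow (derivative (K (m+1))) 2 m
        exact this
      have e2 : (derivative (K (m+1)) * X).coeff (m+2) = (derivative (K (m+1))).coeff (m+1) := by
        rw [coeff_mul_X]
      rw [e1, e2, hq1, hq2, hq3]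
      ring
    rw [hE, coeff_add, coeff_derivative, hWq, coeff_C_mul]
    push_cast
    ring
  have hdegE' : E.natDegree ≤ m := by
    rw [natDegree_le_iff_coeff_eq_zero]
    intro N hN
    rcases eq_or_lt_of_le (Nat.succ_le_of_lt hN) with h | h
    · rw [← h]; exact hcoeff
    · exact coeff_eq_zero_of_natDegree_lt (lt_of_le_of_lt hdegE h)
  -- orthogonality of E to K j for j ≤ m
  have horth : ∀ j ≤ m, (∫ t in t₀..t₁, E.eval t * (K j).eval t) = 0 := by
    intro j hj
    have hWt₀ : W.eval t₀ = 0 := by simp [hW]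
    have hWt₁ : W.eval t₁ = 0 := by simp [hW]
    have hsplit : (∫ t in t₀..t₁, E.eval t * (K j).eval t)
        = (∫ t in t₀..t₁, (derivative (W * derivative (K (m+1)))).eval t * (K j).eval t)
          + ∫ t in t₀..t₁, (Polynomial.C (((m:ℝ)+1)*((m:ℝ)+2)) * K (m+1)).eval t * (K j).eval t := by
      rw [← intervalIntegral.integral_add (polint _ _ _ _) (polint _ _ _ _)]
      exact intervalIntegral.integral_congr (fun t _ => by simp [hE, eval_add]; ring)
    have hI2 : (∫ t in t₀..t₁, (Polynomial.C (((m:ℝ)+1)*((m:ℝ)+2)) * K (m+1)).eval t * (K j).eval t) = 0 := by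
      rw [intervalIntegral.integral_congr
        (g := fun t => (((m:ℝ)+1)*((m:ℝ)+2)) * ((K (m+1)).eval t * (K j).eval t))
        (fun t _ => by simp [eval_mul]; ring), intervalIntegral.integral_const_mul,
        hK.2.2.2 (m+1) j, if_neg (by omega), mul_zero]
    have hI1 : (∫ t in t₀..t₁, (derivative (W * derivative (K (m+1)))).eval t * (K j).eval t)
        = 0 := by
      rw [ibp]
      have b1 : eval t₁ (W * derivative (K (m+1))) = 0 := by simp [hW]
      have b0 : eval t₀ (W * derivative (K (m+1))) = 0 := by simp [hW]
      rw [b1, b0, zero_mul, zero_mul, sub_zero, zero_sub, neg_eq_zero]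
      -- ∫ (W * K') * Kj' = ∫ K' * (W * Kj') = [K W Kj'] - ∫ K * (W Kj')'
      have hstep : (∫ t in t₀..t₁, (W * derivative (K (m+1))).eval t * (derivative (K j)).eval t)
          = ∫ t in t₀..t₁, (derivative (K (m+1))).eval t * (W * derivative (K j)).eval t := by
        exact intervalIntegral.integral_congr (fun t _ => by simp [eval_mul]; ring)
      rw [hstep, ibp]
      have c1 : eval t₁ (W * derivative (K j)) = 0 := by simp [hW]
      have c0 : eval t₀ (W * derivative (K j)) = 0 := by simp [hW]
      rw [c1, c0, mul_zero, mul_zero, sub_zero, zero_sub, neg_eq_zero]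
      have hdegWKj : (derivative (W * derivative (K j))).natDegree ≤ m := by
        rcases Nat.eq_zero_or_pos j with hj0 | hj0
        · have hKj : derivative (K j) = 0 := by
            have : K j = Polynomial.C ((K j).coeff 0) :=
              eq_C_of_natDegree_le_zero (le_of_eq (by rw [hK.1 j, hj0]))
            rw [this]; simp
          rw [hKj, mul_zero]; simp
        · have h : (derivative (K j)).natDegree ≤ j - 1 := by
            have := natDegree_derivative_le (K j); rwa [hK.1 j] at this
          have h2 : (W * derivative (K j)).natDegree ≤ j + 1 :=
            le_trans natDegree_mul_le (le_trans (add_le_add hWdeg h) (by omega))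
          have h3 := natDegree_derivative_le (W * derivative (K j))
          omega
      rw [intervalIntegral.integral_congr
        (g := fun t => (derivative (W * derivative (K j))).eval t * (K (m+1)).eval t)
        (fun t _ => by ring)]
      exact orth hK hdegWKj (by omega)
    rw [hsplit, hI1, hI2, add_zero]
  have hE0 : E = 0 := eq_zero_of_orth ht hK hdegE' horth
  have : derivative (W * derivative (K (m+1)))
      = - (Polynomial.C (((m:ℝ)+1)*((m:ℝ)+2)) * K (m+1)) := by
    have := hE0
    rw [hE] at this
    linear_combination this
  rw [this]
  congr 2
  push_cast
  ring

lemma K_bound (ht : t₀ < t₁) (hK : IsLegendreBasis t₀ t₁ K) (i : ℕ) :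
    ∀ u ∈ Set.Icc t₀ t₁, |(K i).eval u| ≤ 1 := by
  rcases Nat.eq_zero_or_pos i with hi0 | hi0
  · subst hi0; intro u _; rw [K_zero hK]; simp
  intro u hu
  set N : ℝ := (i:ℝ)*((i:ℝ)+1) with hN
  have hNpos : 0 < N := by
    have : (1:ℝ) ≤ (i:ℝ) := by exact_mod_cast hi0
    rw [hN]; nlinarith
  set W : Polynomial ℝ := (X - Polynomial.C t₀) * (Polynomial.C t₁ - X) with hW
  set Vp : Polynomial ℝ := Polynomial.C N * (K i)^2 + W * (derivative (K i))^2 with hVp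
  have hode := legendre_ode ht hK i
  have hode' : derivative W * derivative (K i) + W * derivative (derivative (K i))
      = -(Polynomial.C N * K i) := by
    rw [← derivative_mul, hW]
    exact hode
  have hVd : derivative Vp = (2 * X - Polynomial.C (t₀+t₁))
      * (derivative (K i))^2 := by
    have hdW : derivative W = Polynomial.C (t₀+t₁) - 2 * X := by
      rw [hW]
      simp [derivative_mul, derivative_sub]
      ring
    rw [hVp, derivative_add, derivative_mul, derivative_mul, derivative_C, derivative_pow,
      derivative_pow]
    rw [hdW] at hode' ⊢
    simp only [Polynomial.C_eq_natCast]
    linear_combination (2 * derivative (K i)) * hode'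
  -- the real function
  have hderiv : ∀ x : ℝ, deriv (fun y => Vp.eval y) x
      = (2*x - (t₀+t₁)) * ((derivative (K i)).eval x)^2 := by
    intro x
    rw [(Vp.hasDerivAt x).deriv, hVd]
    simp
  have hdiff : ∀ s : Set ℝ, DifferentiableOn ℝ (fun y => Vp.eval y) (interior s) :=
    fun s => (Vp.differentiable).differentiableOn
  set mid := (t₀+t₁)/2 with hmid
  have hanti : AntitoneOn (fun y => Vp.eval y) (Set.Icc t₀ mid) := by
    apply antitoneOn_of_deriv_nonpos (convex_Icc _ _) ((Vp.continuous).continuousOn)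
      (hdiff _)
    intro x hx
    rw [interior_Icc] at hx
    rw [hderiv x]
    have : 2*x - (t₀+t₁) ≤ 0 := by
      have := hx.2; rw [hmid] at this; linarith
    nlinarith [sq_nonneg ((derivative (K i)).eval x)]
  have hmono : MonotoneOn (fun y => Vp.eval y) (Set.Icc mid t₁) := by
    apply monotoneOn_of_deriv_nonneg (convex_Icc _ _) ((Vp.continuous).continuousOn)
      (hdiff _)
    intro x hx
    rw [interior_Icc] at hx
    rw [hderiv x]
    have : 0 ≤ 2*x - (t₀+t₁) := by
      have := hx.1; rw [hmid] at this; linarith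
    nlinarith [sq_nonneg ((derivative (K i)).eval x)]
  have hvt₀ : Vp.eval t₀ = N := by
    have h1 : ((-1:ℝ)^i)^2 = 1 := by
      rw [← pow_mul, mul_comm, pow_mul]
      norm_num
    rw [hVp]
    simp [eval_add, eval_mul, eval_pow, hW, hK.2.2.1 i, h1]
  have hvt₁ : Vp.eval t₁ = N := by
    rw [hVp]
    simp [eval_add, eval_mul, eval_pow, hW, hK.2.1 i]
  have hvu : Vp.eval u ≤ N := by
    rcases le_total u mid with h | h
    · have h2 := hanti ⟨le_refl t₀, by rw [hmid]; linarith [hu.1, hu.2]⟩ ⟨hu.1, h⟩ hu.1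
      simp only [] at h2
      rw [hvt₀] at h2; exact h2
    · have h2 := hmono ⟨h, hu.2⟩ ⟨by rw [hmid]; linarith [hu.1, hu.2], le_refl t₁⟩ hu.2
      simp only [] at h2
      rw [hvt₁] at h2; exact h2
  have hWnn : 0 ≤ W.eval u := by
    rw [hW]
    simp only [eval_mul, eval_sub, eval_X, eval_C]
    have := hu.1; have := hu.2
    nlinarith
  have hKsq : N * ((K i).eval u)^2 ≤ N := by
    have : N * ((K i).eval u)^2 ≤ Vp.eval u := by
      rw [hVp]
      simp only [eval_add, eval_mul, eval_pow, eval_C]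
      nlinarith [sq_nonneg ((derivative (K i)).eval u), hWnn]
    linarith
  have hsq : ((K i).eval u)^2 ≤ 1 := by nlinarith [hKsq, hNpos]
  nlinarith [hsq, abs_nonneg ((K i).eval u), sq_abs ((K i).eval u)]
end



section
variable {t₀ t₁ : ℝ} {K : ℕ → Polynomial ℝ}

lemma psi_ode {r : ℕ} {lam : ℝ} {ψ : Polynomial ℝ}
    (hψ : Gam t₀ t₁ r K lam ψ = Lop t₀ t₁ r K 1) :
    derivative ψ = Polynomial.C (1 - ψ.eval t₀) * Lop t₀ t₁ r K 1 - Polynomial.C lam * ψ := by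
  have h := hψ
  unfold Gam at h
  have e : Lop t₀ t₁ r K (ψ.eval t₀) = Polynomial.C (ψ.eval t₀) * Lop t₀ t₁ r K 1 := by
    unfold Lop
    rw [← mul_assoc, ← C_mul]
    congr 2
    ring
  rw [e] at h
  simp only [map_sub, C_1]
  linear_combination h

lemma err_pointwise (ht : t₀ < t₁) (hK : IsLegendreBasis t₀ t₁ K) {r : ℕ} {lam : ℝ}
    (hlam : 0 < lam) {ψ : Polynomial ℝ}
    (hψ : Gam t₀ t₁ r K lam ψ = Lop t₀ t₁ r K 1) {t : ℝ} (htI : t ∈ Set.Ioc t₀ t₁) :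
    |errF t₀ lam ψ t| ≤ (2 - Real.exp (-lam * (t₁ - t₀))) * |errF t₀ lam ψ t₀| := by
  have hc' : errF t₀ lam ψ t₀ = 1 - ψ.eval t₀ := by simp [errF]
  set c : ℝ := 1 - ψ.eval t₀ with hc
  set G : Polynomial ℝ := Polynomial.C ((-1:ℝ)^r/2) * (K r - K (r+1)) with hGdef
  have hsq : ((-1:ℝ)^r)*((-1:ℝ)^r) = 1 := by
    rw [← pow_add]; exact Even.neg_one_pow ⟨r, by omega⟩
  have hG' : derivative G = -(Lop t₀ t₁ r K 1) := by
    rw [hGdef, lop_eq ht hK r]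
    simp only [derivative_C_mul, derivative_sub]
    ring
  have hG0 : G.eval t₀ = 1 := by
    rw [hGdef, eval_mul, eval_C, eval_sub, hK.2.2.1 r, hK.2.2.1 (r+1), pow_succ]
    linear_combination hsq
  have hGb : ∀ u ∈ Set.Icc t₀ t₁, |G.eval u| ≤ 1 := by
    intro u hu
    rw [hGdef]
    simp only [eval_mul, eval_sub, eval_C]
    rw [abs_mul]
    have h1 : |(-1:ℝ)^r/2| = 1/2 := by
      rw [abs_div, abs_pow, abs_neg, abs_one, one_pow]; norm_num
    rw [h1]
    have h2 := K_bound ht hK r u hu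
    have h3 := K_bound ht hK (r+1) u hu
    have h4 : |(K r).eval u - (K (r+1)).eval u| ≤ 2 :=
      le_trans (abs_sub _ _) (by linarith)
    linarith
  -- continuity facts
  have hcℓ : Continuous fun s => Real.exp (lam*(s-t₀)) * (Lop t₀ t₁ r K 1).eval s :=
    ((Real.continuous_exp.comp (by continuity)).mul (Lop t₀ t₁ r K 1).continuous)
  have hcG : Continuous fun s => Real.exp (lam*(s-t₀)) * G.eval s :=
    ((Real.continuous_exp.comp (by continuity)).mul G.continuous)
  have hcexp : Continuous fun s : ℝ => Real.exp (lam*(s-t₀)) :=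
    Real.continuous_exp.comp (by continuity)
  -- derivative of the error
  have hede : ∀ u, HasDerivAt (errF t₀ lam ψ)
      (-lam * errF t₀ lam ψ u - c * (Lop t₀ t₁ r K 1).eval u) u := by
    intro u
    have h1 : HasDerivAt (fun v => Real.exp (-lam*(v-t₀))) (Real.exp (-lam*(u-t₀)) * (-lam)) u := by
      have h0 : HasDerivAt (fun v : ℝ => -lam*(v-t₀)) (-lam) u := by
        simpa using ((hasDerivAt_id u).sub_const t₀).const_mul (-lam)
      exact h0.exp
    have h3 := h1.sub (ψ.hasDerivAt u)
    have : errF t₀ lam ψ = fun v => Real.exp (-lam*(v-t₀)) - ψ.eval v := rfl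
    rw [this]
    refine h3.congr_deriv ?_
    rw [psi_ode hψ]
    simp only [errF, eval_sub, eval_mul, eval_C, hc]
    ring
  -- first constant function
  have hΦ : ∀ u : ℝ, Real.exp (lam*(u-t₀)) * errF t₀ lam ψ u
      + c * (∫ s in t₀..u, Real.exp (lam*(s-t₀)) * (Lop t₀ t₁ r K 1).eval s) = c := by
    have hder : ∀ u : ℝ, HasDerivAt (fun u => Real.exp (lam*(u-t₀)) * errF t₀ lam ψ u
        + c * (∫ s in t₀..u, Real.exp (lam*(s-t₀)) * (Lop t₀ t₁ r K 1).eval s)) 0 u := by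
      intro u
      have hexp : HasDerivAt (fun v : ℝ => Real.exp (lam*(v-t₀))) (Real.exp (lam*(u-t₀)) * lam) u := by
        have h0 : HasDerivAt (fun v : ℝ => lam*(v-t₀)) lam u := by
          simpa using ((hasDerivAt_id u).sub_const t₀).const_mul lam
        exact h0.exp
      have hint := ((hcℓ.integral_hasStrictDerivAt t₀ u).hasDerivAt).const_mul c
      have := (hexp.mul (hede u)).add hint
      refine this.congr_deriv ?_
      ring
    intro u
    have hconst := is_const_of_deriv_eq_zero (fun x => (hder x).differentiableAt)
      (fun x => (hder x).deriv) u t₀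
    rw [hconst]
    simp [errF, hc', intervalIntegral.integral_same]
    exact hc.symm
  -- second constant function
  have hΨ : ∀ u : ℝ, Real.exp (lam*(u-t₀)) * G.eval u
      - lam * (∫ s in t₀..u, Real.exp (lam*(s-t₀)) * G.eval s)
      + (∫ s in t₀..u, Real.exp (lam*(s-t₀)) * (Lop t₀ t₁ r K 1).eval s) = 1 := by
    have hder : ∀ u : ℝ, HasDerivAt (fun u => Real.exp (lam*(u-t₀)) * G.eval u
        - lam * (∫ s in t₀..u, Real.exp (lam*(s-t₀)) * G.eval s)
        + (∫ s in t₀..u, Real.exp (lam*(s-t₀)) * (Lop t₀ t₁ r K 1).eval s)) 0 u := by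
      intro u
      have hexp : HasDerivAt (fun v : ℝ => Real.exp (lam*(v-t₀))) (Real.exp (lam*(u-t₀)) * lam) u := by
        have h0 : HasDerivAt (fun v : ℝ => lam*(v-t₀)) lam u := by
          simpa using ((hasDerivAt_id u).sub_const t₀).const_mul lam
        exact h0.exp
      have hint1 := ((hcG.integral_hasStrictDerivAt t₀ u).hasDerivAt).const_mul lam
      have hint2 := (hcℓ.integral_hasStrictDerivAt t₀ u).hasDerivAt
      have := ((hexp.mul (G.hasDerivAt u)).sub hint1).add hint2
      refine this.congr_deriv ?_
      have hGu : (derivative G).eval u = -(Lop t₀ t₁ r K 1).eval u := by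
        rw [hG']; simp
      rw [hGu]
      ring
    intro u
    have hconst := is_const_of_deriv_eq_zero (fun x => (hder x).differentiableAt)
      (fun x => (hder x).deriv) u t₀
    rw [hconst]
    simp [hG0, intervalIntegral.integral_same]
  -- key identity at t
  have hinv : Real.exp (-lam*(t-t₀)) * Real.exp (lam*(t-t₀)) = 1 := by
    rw [← Real.exp_add]
    ring_nf
    exact Real.exp_zero
  have hkey : errF t₀ lam ψ t = c * (G.eval t
      - lam * Real.exp (-lam*(t-t₀)) * (∫ s in t₀..t, Real.exp (lam*(s-t₀)) * G.eval s)) := by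
    have h1 := hΦ t
    have h2 := hΨ t
    linear_combination Real.exp (-lam*(t-t₀)) * h1 - c * Real.exp (-lam*(t-t₀)) * h2
      + (c * G.eval t - errF t₀ lam ψ t) * hinv
  -- integral bound
  have hIG : |∫ s in t₀..t, Real.exp (lam*(s-t₀)) * G.eval s|
      ≤ (Real.exp (lam*(t-t₀)) - 1)/lam := by
    have hstep1 := intervalIntegral.abs_integral_le_integral_abs (μ := volume) (le_of_lt htI.1)
      (f := fun s => Real.exp (lam*(s-t₀)) * G.eval s)
    have hstep2 : (∫ s in t₀..t, |Real.exp (lam*(s-t₀)) * G.eval s|)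
        ≤ ∫ s in t₀..t, Real.exp (lam*(s-t₀)) := by
      apply intervalIntegral.integral_mono_on (le_of_lt htI.1)
        (hcG.abs.intervalIntegrable _ _) (hcexp.intervalIntegrable _ _)
      intro x hx
      rw [abs_mul, Real.abs_exp]
      have hb := hGb x ⟨hx.1, le_trans hx.2 htI.2⟩
      nlinarith [Real.exp_pos (lam*(x-t₀)), abs_nonneg (G.eval x)]
    have hstep3 : (∫ s in t₀..t, Real.exp (lam*(s-t₀))) = (Real.exp (lam*(t-t₀)) - 1)/lam := by
      have hprim : ∀ s : ℝ, HasDerivAt (fun s => Real.exp (lam*(s-t₀))/lam)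
          (Real.exp (lam*(s-t₀))) s := by
        intro s
        have h0 : HasDerivAt (fun v : ℝ => lam*(v-t₀)) lam s := by
          simpa using ((hasDerivAt_id s).sub_const t₀).const_mul lam
        have h1 := (h0.exp).div_const lam
        refine h1.congr_deriv ?_
        field_simp
      rw [intervalIntegral.integral_eq_sub_of_hasDerivAt (fun s _ => hprim s)
        (hcexp.intervalIntegrable _ _)]
      simp [sub_div]
    linarith
  -- final estimate
  rw [hkey, hc', abs_mul, mul_comm |c| _]
  apply mul_le_mul_of_nonneg_right _ (abs_nonneg c)
  have hGt := hGb t ⟨le_of_lt htI.1, htI.2⟩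
  have hexp_le : Real.exp (-lam*(t₁-t₀)) ≤ Real.exp (-lam*(t-t₀)) := by
    apply Real.exp_le_exp.mpr
    nlinarith [htI.2]
  have hterm : |lam * Real.exp (-lam*(t-t₀)) * (∫ s in t₀..t, Real.exp (lam*(s-t₀)) * G.eval s)|
      ≤ 1 - Real.exp (-lam*(t-t₀)) := by
    rw [abs_mul, abs_mul, abs_of_pos hlam, Real.abs_exp]
    have h5 : lam * Real.exp (-lam*(t-t₀)) *
        |∫ s in t₀..t, Real.exp (lam*(s-t₀)) * G.eval s|
        ≤ lam * Real.exp (-lam*(t-t₀)) * ((Real.exp (lam*(t-t₀)) - 1)/lam) := by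
      apply mul_le_mul_of_nonneg_left hIG
      positivity
    have h6 : lam * Real.exp (-lam*(t-t₀)) * ((Real.exp (lam*(t-t₀)) - 1)/lam)
        = 1 - Real.exp (-lam*(t-t₀)) := by
      have hl : lam ≠ 0 := ne_of_gt hlam
      have hinv2 := hinv
      simp only [neg_mul] at hinv2 ⊢
      field_simp
      linear_combination hinv2
    rw [mul_assoc] at h5 ⊢
    rw [mul_assoc] at h6
    linarith
    -- careful
  calc |G.eval t - lam * Real.exp (-lam*(t-t₀)) * (∫ s in t₀..t, Real.exp (lam*(s-t₀)) * G.eval s)|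
      ≤ |G.eval t| + |lam * Real.exp (-lam*(t-t₀)) * (∫ s in t₀..t, Real.exp (lam*(s-t₀)) * G.eval s)| :=
        abs_sub _ _
    _ ≤ 1 + (1 - Real.exp (-lam*(t-t₀))) := by linarith
    _ ≤ 2 - Real.exp (-lam*(t₁-t₀)) := by linarith




/-- Uniform bound `sup_I |e/e(t₀)| ≤ 2 - exp(-λ k)`, and hence
`1 ≤ C^{L²} ≤ (2 - exp(-λ k)) Υ(r, kλ) + 1`. -/
theorem stmt_15 (t₀ t₁ : ℝ) (ht : t₀ < t₁) (r : ℕ) (K : ℕ → Polynomial ℝ)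
    (hK : IsLegendreBasis t₀ t₁ K) (lam : ℝ) (hlam : 0 < lam)
    (ψ : Polynomial ℝ) (hψdeg : ψ.natDegree ≤ r)
    (hψ : Gam t₀ t₁ r K lam ψ = Lop t₀ t₁ r K 1) :
    (⨆ t ∈ Set.Ioc t₀ t₁, |errF t₀ lam ψ t / errF t₀ lam ψ t₀|)
      ≤ 2 - Real.exp (-lam * (t₁ - t₀)) ∧
    1 ≤ CL2 t₀ t₁ r lam ψ ∧
    CL2 t₀ t₁ r lam ψ
      ≤ (2 - Real.exp (-lam * (t₁ - t₀))) * Upsilon r ((t₁ - t₀) * lam) + 1 := by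
  have hB0 : (0:ℝ) ≤ 2 - Real.exp (-lam*(t₁-t₀)) := by
    have h1 : Real.exp (-lam*(t₁-t₀)) ≤ 1 := by
      rw [← Real.exp_zero]
      apply Real.exp_le_exp.mpr
      nlinarith
    linarith
  have hsup : (⨆ t ∈ Set.Ioc t₀ t₁, |errF t₀ lam ψ t / errF t₀ lam ψ t₀|)
      ≤ 2 - Real.exp (-lam * (t₁ - t₀)) := by
    apply Real.iSup_le _ hB0
    intro t
    apply Real.iSup_le _ hB0
    intro htI
    rcases eq_or_ne (errF t₀ lam ψ t₀) 0 with h0 | h0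
    · rw [h0, div_zero, abs_zero]; exact hB0
    · rw [abs_div, div_le_iff₀ (abs_pos.mpr h0)]
      exact err_pointwise ht hK hlam hψ htI
  have hsnn : 0 ≤ (⨆ t ∈ Set.Ioc t₀ t₁, |errF t₀ lam ψ t / errF t₀ lam ψ t₀|) :=
    Real.iSup_nonneg (fun t => Real.iSup_nonneg (fun _ => abs_nonneg _))
  have hups : 0 ≤ Upsilon r ((t₁-t₀)*lam) := Real.sqrt_nonneg _
  refine ⟨hsup, ?_, ?_⟩
  · unfold CL2
    nlinarith [mul_nonneg hups hsnn]
  · unfold CL2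
    have h2 := mul_le_mul_of_nonneg_left hsup hups
    rw [mul_comm (2 - Real.exp (-lam * (t₁ - t₀))) (Upsilon r ((t₁ - t₀) * lam))]
    linarith
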